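/- Let A --(x,α)^T--> B ⊕ X₀ --(y,γ)--> C --δ--> A⟦1⟧ be a distinguished triangle, where X₀ lies in X and α: A → X₀ is a left X-approximation of A. Then y: B → C is X-monic. -/

import Mathlib

/-!
Common definitions: the ideal of morphisms factoring through a subcategory `X`
(given as a set of objects of `C`), `X`-monic and `X`-epic morphisms, left and
right `X`-approximations, additive subcategories closed under isomorphisms,
direct sums and direct summands, and the additive quotient category `C/X`
(realized via `CategoryTheory.Quotient` of the relation `xRel X`).
-/

open CategoryTheory Category Limits Pretriangulated

universe v u

namespace PaperStmt

variable {C : Type u} [Category.{v} C]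

/-- `f` factors through an object of `X`. -/
def FactorsThru (X : Set C) {A B : C} (f : A ⟶ B) : Prop :=
  ∃ (M : C) (g : A ⟶ M) (h : M ⟶ B), M ∈ X ∧ g ≫ h = f

/-- `f : A ⟶ B` is `X`-monic: the map `Hom(B, X') → Hom(A, X')`, `g ↦ g ∘ f`,
is surjective for every object `X'` of `X`. -/
def IsXMonic (X : Set C) {A B : C} (f : A ⟶ B) : Prop :=
  ∀ ⦃X' : C⦄, X' ∈ X → ∀ g : A ⟶ X', ∃ h : B ⟶ X', f ≫ h = g

/-- `f : A ⟶ B` is `X`-epic: the map `Hom(X', A) → Hom(X', B)`, `g ↦ f ∘ g`,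
is surjective for every object `X'` of `X`. -/
def IsXEpic (X : Set C) {A B : C} (f : A ⟶ B) : Prop :=
  ∀ ⦃X' : C⦄, X' ∈ X → ∀ g : X' ⟶ B, ∃ h : X' ⟶ A, h ≫ f = g

/-- `α : A ⟶ X₀` is a left `X`-approximation of `A`: `X₀` lies in `X` and every
morphism from `A` to an object of `X` factors through `α`. -/
def IsLeftApprox (X : Set C) {A X₀ : C} (α : A ⟶ X₀) : Prop :=
  X₀ ∈ X ∧ IsXMonic X α

/-- `β : X₀ ⟶ B` is a right `X`-approximation of `B`: `X₀` lies in `X` and every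
morphism from an object of `X` to `B` factors through `β`. -/
def IsRightApprox (X : Set C) {X₀ B : C} (β : X₀ ⟶ B) : Prop :=
  X₀ ∈ X ∧ IsXEpic X β

/-- `X` is (the object class of) a full additive subcategory of `C`, closed
under isomorphisms, finite direct sums and direct summands. -/
structure IsAdditiveClosedSubcat [Preadditive C] [HasBinaryBiproducts C] (X : Set C) :
    Prop where
  zero_mem : ∀ Z : C, IsZero Z → Z ∈ X
  iso_closed : ∀ {A B : C}, (A ≅ B) → A ∈ X → B ∈ X
  sum_closed : ∀ {A B : C}, A ∈ X → B ∈ X → (A ⊞ B) ∈ X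
  summand_closed : ∀ {A B : C}, (A ⊞ B) ∈ X → A ∈ X

/-- Two morphisms are identified in the quotient category `C/X` precisely when
their difference factors through an object of `X`. -/
def xRel [Preadditive C] (X : Set C) : HomRel C :=
  fun _ _ f g => FactorsThru X (f - g)

/-- if `A --(x,α)ᵀ--> B ⊞ X₀ --(y,γ)--> Z --δ--> A⟦1⟧` is a
distinguished triangle with `X₀ ∈ X` and `α : A ⟶ X₀` a left
`X`-approximation of `A`, then `y : B ⟶ Z` is `X`-monic. -/
theorem statement8 [Preadditive C] [HasZeroObject C] [HasShift C ℤ]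
    [∀ n : ℤ, (shiftFunctor C n).Additive] [Pretriangulated C] [HasBinaryBiproducts C]
    (X : Set C) (hX : IsAdditiveClosedSubcat X)
    {A B X₀ Z : C}
    (x : A ⟶ B) (α : A ⟶ X₀) (y : B ⟶ Z) (γ : X₀ ⟶ Z) (δ : Z ⟶ (A⟦(1 : ℤ)⟧))
    (hT : Triangle.mk (biprod.lift x α) (biprod.desc y γ) δ ∈ distTriang C)
    (hα : IsLeftApprox X α) :
    IsXMonic X y := by
  intro X' hX' g
  obtain ⟨s, hs⟩ := hα.2 hX' (x ≫ g)
  obtain ⟨h, hh⟩ := Triangle.yoneda_exact₂ _ hT (biprod.desc g (-s)) (by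
    show biprod.lift x α ≫ biprod.desc g (-s) = 0
    rw [biprod.lift_desc, Preadditive.comp_neg, hs, add_neg_cancel])
  refine ⟨h, ?_⟩
  have := biprod.inl_desc y γ
  calc y ≫ h = biprod.inl ≫ biprod.desc y γ ≫ h := (biprod.inl_desc_assoc y γ h).symm
    _ = g := by
        have hh' : biprod.desc g (-s) = biprod.desc y γ ≫ h := hh
        rw [← hh']; simp

end PaperStmt
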